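/- arXiv:2503.21174 — 6 statements merged into one kernel-verified Lean document; each statement's English description precedes it below -/
import Mathlib

section
/- Let G be a finite simple graph, k ≥ 3 an integer, and λ a complex eigenvalue of the k-power hypergraph G^(k). Then the nonnegative real number |λ| is also an eigenvalue of G^(k). -/
open Matrix Finset
open scoped Classical

noncomputable section

/-- `μ` is an eigenvalue of the real matrix `A`. -/
def IsEigenval {n : Type*} [Fintype n] (A : Matrix n n ℝ) (μ : ℝ) : Prop :=
  ∃ x : n → ℝ, x ≠ 0 ∧ A.mulVec x = μ • x

/-- The spectral radius of a real symmetric matrix: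
the largest modulus of an eigenvalue. -/
def specRad {n : Type*} [Fintype n] (A : Matrix n n ℝ) : ℝ :=
  sSup {r : ℝ | ∃ μ : ℝ, IsEigenval A μ ∧ r = |μ|}

/-- The spectral radius of a finite simple graph. -/
def grho {V : Type*} [Fintype V] [DecidableEq V] (G : SimpleGraph V) : ℝ :=
  letI := Classical.decRel G.Adj
  specRad (G.adjMatrix ℝ)

/-- max over edges of spectral radius of the edge-deleted graph -/
def rhoE {V : Type*} [Fintype V] [DecidableEq V] (G : SimpleGraph V) : ℝ :=
  sSup {r : ℝ | ∃ e ∈ G.edgeSet, r = grho (G.deleteEdges {e})}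

/-- Eigenpair of the k-power hypergraph G^(k). -/
def IsPowerEigenpair {V : Type*} [Fintype V] [DecidableEq V] (G : SimpleGraph V) (k : ℕ)
    (lam : ℂ) (x : (V ⊕ (G.edgeSet × Fin (k - 2))) → ℂ) : Prop :=
  x ≠ 0 ∧
    (∀ i : V, lam * x (Sum.inl i) ^ (k - 1) =
      ∑ j : V, if h : G.Adj i j then
        x (Sum.inl j) * ∏ t : Fin (k - 2), x (Sum.inr (⟨s(i, j), (G.mem_edgeSet).mpr h⟩, t))
      else 0) ∧
    ∀ (i j : V) (h : G.Adj i j) (t : Fin (k - 2)),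
      lam * x (Sum.inr (⟨s(i, j), (G.mem_edgeSet).mpr h⟩, t)) ^ (k - 1) =
        x (Sum.inl i) * x (Sum.inl j) *
          ∏ u ∈ Finset.univ.erase t, x (Sum.inr (⟨s(i, j), (G.mem_edgeSet).mpr h⟩, u))

/-- λ is an eigenvalue of G^(k). -/
def IsPowerEigenvalue {V : Type*} [Fintype V] [DecidableEq V] (G : SimpleGraph V) (k : ℕ)
    (lam : ℂ) : Prop :=
  ∃ x, IsPowerEigenpair G k lam x

/-- The adjacency matrix of a signed graph, sign function `π : G.edgeSet → ℤˣ`. -/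
def signedAdj {V : Type*} [Fintype V] [DecidableEq V] (G : SimpleGraph V)
    (π : G.edgeSet → ℤˣ) : Matrix V V ℝ :=
  Matrix.of fun i j => if h : G.Adj i j then ((π ⟨s(i, j), (G.mem_edgeSet).mpr h⟩ : ℤ) : ℝ) else 0

/-- Switching-equivalence of matrices. -/
def SwitchEquiv {V : Type*} [Fintype V] [DecidableEq V] (A B : Matrix V V ℝ) : Prop :=
  ∃ d : V → ℝ, (∀ i, d i = 1 ∨ d i = -1) ∧ B = Matrix.diagonal d * A * Matrix.diagonal d

/-- A signed graph is balanced if it is switching equivalent to the all-`+1` signing. -/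
def IsBalanced {V : Type*} [Fintype V] [DecidableEq V] (G : SimpleGraph V)
    (π : G.edgeSet → ℤˣ) : Prop :=
  SwitchEquiv (signedAdj G π) (signedAdj G fun _ => 1)

def IsBipartite {V : Type*} (G : SimpleGraph V) : Prop :=
  ∃ c : V → Bool, ∀ ⦃i j⦄, G.Adj i j → c i ≠ c j

end


namespace PowerAux

variable {V : Type*} [Fintype V] [DecidableEq V]

/-- Component of the eigenvector at the `t`-th added vertex of edge `{i,j}`. -/
def pe (G : SimpleGraph V) (k : ℕ) (x : (V ⊕ (G.edgeSet × Fin (k - 2))) → ℂ)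
    (i j : V) (h : G.Adj i j) (t : Fin (k - 2)) : ℂ :=
  x (Sum.inr (⟨s(i, j), (G.mem_edgeSet).mpr h⟩, t))

lemma pe_symm (G : SimpleGraph V) (k : ℕ) (x : (V ⊕ (G.edgeSet × Fin (k - 2))) → ℂ)
    (i j : V) (h : G.Adj i j) (t : Fin (k - 2)) :
    pe G k x i j h t = pe G k x j i h.symm t := by
  unfold pe
  have he : (⟨s(i, j), (G.mem_edgeSet).mpr h⟩ : G.edgeSet)
      = ⟨s(j, i), (G.mem_edgeSet).mpr h.symm⟩ := Subtype.ext (Sym2.eq_swap)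
  rw [he]

lemma scale_eigen (G : SimpleGraph V) (k : ℕ) (hk : 3 ≤ k) (lam ω : ℂ) (hω : ω ^ k = 1)
    (h : IsPowerEigenvalue G k lam) : IsPowerEigenvalue G k (ω * lam) := by
  obtain ⟨x, hx0, hv, he⟩ := h
  have hm : 0 < k - 2 := by omega
  have hω0 : ω ≠ 0 := fun h0 => by simp [h0, zero_pow (by omega : k ≠ 0)] at hω
  have hωk : ω ^ (k - 1) * ω = 1 := by
    rw [← pow_succ, show k - 1 + 1 = k by omega]; exact hω
  set t0 : Fin (k - 2) := ⟨0, hm⟩ with ht0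
  set c : Fin (k - 2) → ℂ := fun t => if t = t0 then ω else 1 with hc
  have hc0 : ∀ t, c t ≠ 0 := by
    intro t; by_cases hp : t = t0 <;> simp [hc, hp, hω0]
  refine ⟨Sum.elim (fun i => x (Sum.inl i)) (fun p => c p.2 * x (Sum.inr p)), ?_, ?_, ?_⟩
  · obtain ⟨a, ha⟩ := Function.ne_iff.mp hx0
    apply Function.ne_iff.mpr
    refine ⟨a, ?_⟩
    cases a with
    | inl i => simpa using ha
    | inr p =>
      simp only [Sum.elim_inr]
      exact mul_ne_zero (hc0 p.2) (by simpa using ha)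
  · intro i
    simp only [Sum.elim_inl, Sum.elim_inr]
    rw [mul_assoc, hv i, Finset.mul_sum]
    refine Finset.sum_congr rfl fun j _ => ?_
    by_cases h : G.Adj i j
    · simp only [dif_pos h]
      rw [Finset.prod_mul_distrib]
      have hcp : (∏ t : Fin (k - 2), c t) = ω := by
        rw [hc, Finset.prod_ite_eq' Finset.univ t0 (fun _ => ω)]
        simp
      rw [hcp]; ring
    · simp [h]
  · intro i j h t
    simp only [Sum.elim_inl, Sum.elim_inr]
    rw [Finset.prod_mul_distrib]
    have hce : (∏ u ∈ Finset.univ.erase t, c u) = if t = t0 then 1 else ω := by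
      rw [hc, Finset.prod_ite_eq' (Finset.univ.erase t) t0 (fun _ => ω)]
      by_cases ht : t = t0
      · simp [ht]
      · simp [Finset.mem_erase, ht, Ne.symm ht]
    rw [hce]
    have hek := he i j h t
    by_cases ht : t = t0
    · simp only [hc, if_pos ht, mul_pow]
      calc ω * lam * (ω ^ (k - 1) * x (Sum.inr (⟨s(i, j), (G.mem_edgeSet).mpr h⟩, t)) ^ (k - 1))
          = (ω ^ (k - 1) * ω) * (lam * x (Sum.inr (⟨s(i, j), (G.mem_edgeSet).mpr h⟩, t)) ^ (k - 1)) := by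
            ring
        _ = _ := by rw [hωk, hek]; ring
    · simp only [hc, if_neg ht, one_mul]
      calc ω * lam * x (Sum.inr (⟨s(i, j), (G.mem_edgeSet).mpr h⟩, t)) ^ (k - 1)
          = ω * (lam * x (Sum.inr (⟨s(i, j), (G.mem_edgeSet).mpr h⟩, t)) ^ (k - 1)) := by ring
        _ = _ := by rw [hek]; ring

set_option maxHeartbeats 1000000 in
lemma key (G : SimpleGraph V) (k : ℕ) (hk : 3 ≤ k) (lam : ℂ) (hl : lam ≠ 0)
    (hlam : IsPowerEigenvalue G k lam) :
    ((‖lam‖ : ℝ) : ℂ) ^ k = lam ^ k := by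
  obtain ⟨x, hx0, hv, he⟩ := hlam
  have hm : 0 < k - 2 := by omega
  have hk0 : k ≠ 0 := by omega
  set t0 : Fin (k - 2) := ⟨0, hm⟩ with ht0
  have hpow : ∀ a : ℂ, a ^ k = a ^ (k - 1) * a := by
    intro a
    have hkk : k - 1 + 1 = k := by omega
    conv_lhs => rw [← hkk]
    rw [pow_succ]
  -- the basic product identity for added vertices
  have h1 : ∀ (i j : V) (h : G.Adj i j) (t : Fin (k - 2)),
      lam * pe G k x i j h t ^ k
        = x (Sum.inl i) * x (Sum.inl j) * ∏ u : Fin (k - 2), pe G k x i j h u := by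
    intro i j h t
    have hek : lam * pe G k x i j h t ^ (k - 1)
        = x (Sum.inl i) * x (Sum.inl j) * ∏ u ∈ Finset.univ.erase t, pe G k x i j h u :=
      he i j h t
    calc lam * pe G k x i j h t ^ k
        = (lam * pe G k x i j h t ^ (k - 1)) * pe G k x i j h t := by rw [hpow]; ring
      _ = x (Sum.inl i) * x (Sum.inl j) *
            ((∏ u ∈ Finset.univ.erase t, pe G k x i j h u) * pe G k x i j h t) := by
          rw [hek]; ring
      _ = _ := by rw [Finset.prod_erase_mul _ _ (Finset.mem_univ t)]
  -- the row identity
  have hrow : ∀ i : V, x (Sum.inl i) ^ k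
      = ∑ j : V, if h : G.Adj i j then pe G k x i j h t0 ^ k else 0 := by
    intro i
    apply mul_left_cancel₀ hl
    calc lam * x (Sum.inl i) ^ k
        = (lam * x (Sum.inl i) ^ (k - 1)) * x (Sum.inl i) := by rw [hpow]; ring
      _ = (∑ j : V, if h : G.Adj i j then
            x (Sum.inl j) * ∏ t : Fin (k - 2), pe G k x i j h t else 0) * x (Sum.inl i) :=
          congrArg (· * x (Sum.inl i)) (hv i)
      _ = ∑ j : V, if h : G.Adj i j then lam * pe G k x i j h t0 ^ k else 0 := by
          rw [Finset.sum_mul]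
          refine Finset.sum_congr rfl fun j _ => ?_
          by_cases h : G.Adj i j
          · rw [dif_pos h, dif_pos h]
            linear_combination -(h1 i j h t0)
          · rw [dif_neg h, dif_neg h, zero_mul]
      _ = lam * ∑ j : V, if h : G.Adj i j then pe G k x i j h t0 ^ k else 0 := by
          rw [Finset.mul_sum]
          exact Finset.sum_congr rfl fun j _ => by by_cases h : G.Adj i j <;> simp [h]
  -- square roots
  obtain ⟨z, hz2⟩ : ∃ z : V → ℂ, ∀ i, z i ^ 2 = x (Sum.inl i) ^ k :=
    ⟨fun i => (x (Sum.inl i) ^ k) ^ (((2 : ℕ) : ℂ)⁻¹),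
      fun i => Complex.cpow_nat_inv_pow _ two_ne_zero⟩
  obtain ⟨σ, hσ2⟩ : ∃ σ : ℂ, σ ^ 2 = lam ^ k :=
    ⟨(lam ^ k) ^ (((2 : ℕ) : ℂ)⁻¹), Complex.cpow_nat_inv_pow _ two_ne_zero⟩
  have hzx : ∀ i, z i = 0 → x (Sum.inl i) = 0 := by
    intro i h0
    have hxk : x (Sum.inl i) ^ k = 0 := by rw [← hz2 i, h0]; ring
    exact (pow_eq_zero_iff hk0).mp hxk
  have hxz : ∀ i, x (Sum.inl i) = 0 → z i = 0 := by
    intro i h0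
    have hzz : z i ^ 2 = 0 := by rw [hz2 i, h0, zero_pow hk0]
    exact (pow_eq_zero_iff two_ne_zero).mp hzz
  -- live edges
  have hlive : ∀ (i j : V) (h : G.Adj i j), pe G k x i j h t0 ^ k ≠ 0 →
      x (Sum.inl i) ≠ 0 ∧ x (Sum.inl j) ≠ 0 ∧
        lam ^ k * (pe G k x i j h t0 ^ k) ^ 2 = (x (Sum.inl i) * x (Sum.inl j)) ^ k := by
    intro i j h hS
    have h10 := h1 i j h t0
    have hP : ∀ u, pe G k x i j h u ^ k = pe G k x i j h t0 ^ k := fun u =>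
      mul_left_cancel₀ hl ((h1 i j h u).trans (h1 i j h t0).symm)
    have hne : x (Sum.inl i) * x (Sum.inl j) * ∏ u : Fin (k - 2), pe G k x i j h u ≠ 0 := by
      rw [← h10]; exact mul_ne_zero hl hS
    have hxi : x (Sum.inl i) ≠ 0 := by intro h0; apply hne; rw [h0]; ring
    have hxj : x (Sum.inl j) ≠ 0 := by intro h0; apply hne; rw [h0]; ring
    refine ⟨hxi, hxj, ?_⟩
    have hPk : (∏ u : Fin (k - 2), pe G k x i j h u) ^ k
        = (pe G k x i j h t0 ^ k) ^ (k - 2) := by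
      rw [← Finset.prod_pow, Finset.prod_congr rfl fun u _ => hP u,
        Finset.prod_const, Finset.card_univ, Fintype.card_fin]
    have e1 : lam ^ k * (pe G k x i j h t0 ^ k) ^ k
        = (x (Sum.inl i) * x (Sum.inl j)) ^ k * (pe G k x i j h t0 ^ k) ^ (k - 2) := by
      rw [← hPk, ← mul_pow, ← mul_pow, h10]
    have e2 : (pe G k x i j h t0 ^ k) ^ k
        = (pe G k x i j h t0 ^ k) ^ (k - 2) * (pe G k x i j h t0 ^ k) ^ 2 := by
      rw [← pow_add]; congr 1; omega
    rw [e2] at e1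
    apply mul_right_cancel₀ (pow_ne_zero (k - 2) hS)
    linear_combination e1
  -- signs
  set ε : ∀ i j : V, G.Adj i j → ℂ := fun i j h =>
    if z i * z j = 0 then 0 else σ * pe G k x i j h t0 ^ k / (z i * z j) with hεd
  have hw : ∀ (i j : V) (h : G.Adj i j),
      σ * pe G k x i j h t0 ^ k = ε i j h * (z i * z j) := by
    intro i j h
    by_cases hzz : z i * z j = 0
    · simp only [hεd, if_pos hzz]
      have hS0 : pe G k x i j h t0 ^ k = 0 := by
        by_contra hS
        obtain ⟨hxi, hxj, -⟩ := hlive i j h hS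
        exact mul_ne_zero (fun h0 => hxi (hzx i h0)) (fun h0 => hxj (hzx j h0)) hzz
      rw [hS0, mul_zero, zero_mul]
    · simp only [hεd, if_neg hzz]
      rw [div_mul_cancel₀ _ hzz]
  have hεc : ∀ (i j : V) (h : G.Adj i j), (starRingEnd ℂ) (ε i j h) = ε i j h := by
    intro i j h
    by_cases hzz : z i * z j = 0
    · simp only [hεd, if_pos hzz, map_zero]
    · by_cases hS : pe G k x i j h t0 ^ k = 0
      · simp only [hεd, if_neg hzz, hS]
        simp
      · obtain ⟨hxi, hxj, hkk⟩ := hlive i j h hS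
        have hsq : ε i j h ^ 2 * (z i * z j) ^ 2 = σ ^ 2 * (pe G k x i j h t0 ^ k) ^ 2 := by
          rw [← mul_pow, ← hw i j h, mul_pow]
        have hzz2 : (z i * z j) ^ 2 = (x (Sum.inl i) * x (Sum.inl j)) ^ k := by
          rw [mul_pow, hz2, hz2, ← mul_pow]
        rw [hσ2, hzz2, hkk] at hsq
        have hne : (x (Sum.inl i) * x (Sum.inl j)) ^ k ≠ 0 :=
          pow_ne_zero _ (mul_ne_zero hxi hxj)
        have hε1 : ε i j h ^ 2 = 1 := mul_right_cancel₀ hne (by rw [one_mul]; exact hsq)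
        have hfac : (ε i j h - 1) * (ε i j h + 1) = 0 := by linear_combination hε1
        rcases mul_eq_zero.mp hfac with h' | h'
        · rw [sub_eq_zero.mp h']; simp
        · rw [eq_neg_of_add_eq_zero_left h']; simp
  have hεs : ∀ (i j : V) (h : G.Adj i j), ε i j h = ε j i h.symm := by
    intro i j h
    simp only [hεd]
    rw [pe_symm G k x i j h t0, mul_comm (z i) (z j)]
  -- rows in z-form
  have hrowz : ∀ i : V, z i ≠ 0 →
      σ * z i = ∑ j : V, if h : G.Adj i j then ε i j h * z j else 0 := by
    intro i hzi
    apply mul_right_cancel₀ hzi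
    calc σ * z i * z i = σ * x (Sum.inl i) ^ k := by rw [mul_assoc, ← pow_two, hz2 i]
      _ = σ * ∑ j : V, if h : G.Adj i j then pe G k x i j h t0 ^ k else 0 := by rw [hrow i]
      _ = ∑ j : V, if h : G.Adj i j then σ * pe G k x i j h t0 ^ k else 0 := by
          rw [Finset.mul_sum]
          exact Finset.sum_congr rfl fun j _ => by by_cases h : G.Adj i j <;> simp [h]
      _ = ∑ j : V, if h : G.Adj i j then ε i j h * (z i * z j) else 0 := by
          refine Finset.sum_congr rfl fun j _ => ?_
          by_cases h : G.Adj i j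
          · rw [dif_pos h, dif_pos h, hw i j h]
          · rw [dif_neg h, dif_neg h]
      _ = (∑ j : V, if h : G.Adj i j then ε i j h * z j else 0) * z i := by
          rw [Finset.sum_mul]
          refine Finset.sum_congr rfl fun j _ => ?_
          by_cases h : G.Adj i j
          · rw [dif_pos h, dif_pos h]; ring
          · rw [dif_neg h, dif_neg h, zero_mul]
  -- a vertex with nonzero coordinate
  have hzex : ∃ i0 : V, z i0 ≠ 0 := by
    have hxex : ∃ i0 : V, x (Sum.inl i0) ≠ 0 := by
      obtain ⟨a, ha⟩ := Function.ne_iff.mp hx0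
      cases a with
      | inl i => exact ⟨i, by simpa using ha⟩
      | inr p =>
        obtain ⟨⟨e, hee⟩, t⟩ := p
        replace ha : x (Sum.inr (⟨e, hee⟩, t)) ≠ 0 := by simpa using ha
        revert hee
        induction e using Sym2.ind with
        | _ i j =>
          intro hee ha
          have h : G.Adj i j := (G.mem_edgeSet).mp hee
          have hpe : pe G k x i j h t ≠ 0 := ha
          have hne : x (Sum.inl i) * x (Sum.inl j) * ∏ u : Fin (k - 2), pe G k x i j h u ≠ 0 := by
            rw [← h1 i j h t]; exact mul_ne_zero hl (pow_ne_zero _ hpe)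
          exact ⟨i, left_ne_zero_of_mul (left_ne_zero_of_mul hne)⟩
    obtain ⟨i0, hi0⟩ := hxex
    exact ⟨i0, fun h0 => hi0 (hzx i0 h0)⟩
  obtain ⟨i0, hi0⟩ := hzex
  -- the norm
  set N : ℝ := ∑ i : V, Complex.normSq (z i) with hNdef
  have hNpos : 0 < N :=
    Finset.sum_pos' (fun i _ => Complex.normSq_nonneg _)
      ⟨i0, Finset.mem_univ _, Complex.normSq_pos.mpr hi0⟩
  have hNc : ((N : ℝ) : ℂ) ≠ 0 := Complex.ofReal_ne_zero.mpr (ne_of_gt hNpos)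
  have hNC : ((N : ℝ) : ℂ) = ∑ i : V, (starRingEnd ℂ) (z i) * z i := by
    rw [hNdef]
    push_cast
    exact Finset.sum_congr rfl fun i _ => Complex.normSq_eq_conj_mul_self
  set T : ℂ := ∑ i : V, ∑ j : V,
      (if h : G.Adj i j then (starRingEnd ℂ) (z i) * (ε i j h * z j) else 0) with hTdef
  have hσN : σ * (N : ℂ) = T := by
    rw [hTdef, hNC, Finset.mul_sum]
    refine Finset.sum_congr rfl fun i _ => ?_
    by_cases hzi : z i = 0
    · rw [hzi]; simp
    · rw [show σ * ((starRingEnd ℂ) (z i) * z i)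
          = (starRingEnd ℂ) (z i) * (σ * z i) by ring, hrowz i hzi, Finset.mul_sum]
      refine Finset.sum_congr rfl fun j _ => ?_
      by_cases h : G.Adj i j
      · rw [dif_pos h, dif_pos h]
      · rw [dif_neg h, dif_neg h, mul_zero]
  have hTc : (starRingEnd ℂ) T = T := by
    have step1 : (starRingEnd ℂ) T = ∑ i : V, ∑ j : V,
        (if h : G.Adj i j then z i * (ε i j h * (starRingEnd ℂ) (z j)) else 0) := by
      rw [hTdef, map_sum]
      refine Finset.sum_congr rfl fun i _ => ?_
      rw [map_sum]
      refine Finset.sum_congr rfl fun j _ => ?_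
      by_cases h : G.Adj i j
      · rw [dif_pos h, dif_pos h, _root_.map_mul, _root_.map_mul, Complex.conj_conj, hεc i j h]
      · rw [dif_neg h, dif_neg h, map_zero]
    rw [step1, Finset.sum_comm, hTdef]
    refine Finset.sum_congr rfl fun a _ => Finset.sum_congr rfl fun b _ => ?_
    by_cases h : G.Adj a b
    · rw [dif_pos h.symm, dif_pos h, hεs b a h.symm]
      ring
    · rw [dif_neg (fun h' => h h'.symm), dif_neg h]
  have hσc : (starRingEnd ℂ) σ = σ := by
    apply mul_right_cancel₀ hNc
    calc (starRingEnd ℂ) σ * ((N : ℝ) : ℂ)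
        = (starRingEnd ℂ) (σ * ((N : ℝ) : ℂ)) := by rw [_root_.map_mul, Complex.conj_ofReal]
      _ = (starRingEnd ℂ) T := by rw [hσN]
      _ = T := hTc
      _ = σ * ((N : ℝ) : ℂ) := hσN.symm
  obtain ⟨r, hr⟩ := Complex.conj_eq_iff_real.mp hσc
  have hlamk : lam ^ k = ((r ^ 2 : ℝ) : ℂ) := by rw [← hσ2, hr]; push_cast; ring
  have habs : ‖lam‖ ^ k = r ^ 2 := by
    have habs2 : ‖lam ^ k‖ = ‖(((r ^ 2 : ℝ) : ℂ))‖ := by rw [hlamk]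
    rwa [norm_pow, Complex.norm_real, Real.norm_eq_abs, abs_of_nonneg (sq_nonneg r)] at habs2
  rw [show ((‖lam‖ : ℝ) : ℂ) ^ k = ((‖lam‖ ^ k : ℝ) : ℂ) by push_cast; ring,
    habs, ← hlamk]

end PowerAux

/-- If `λ` is an eigenvalue of the power hypergraph `G^(k)`, then so is the
nonnegative real number `|λ|`. -/
theorem abs_isPowerEigenvalue
    {V : Type*} [Fintype V] [DecidableEq V] (G : SimpleGraph V)
    (k : ℕ) (hk : 3 ≤ k) (lam : ℂ) (hlam : IsPowerEigenvalue G k lam) :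
    IsPowerEigenvalue G k ((‖lam‖ : ℝ) : ℂ) := by
  by_cases hl : lam = 0
  · subst hl
    simpa using hlam
  · have hkey := PowerAux.key G k hk lam hl hlam
    have hω : (((‖lam‖ : ℝ) : ℂ) / lam) ^ k = 1 := by
      rw [div_pow, hkey, div_self (pow_ne_zero _ hl)]
    have hres := PowerAux.scale_eigen G k hk lam _ hω hlam
    rwa [div_mul_cancel₀ _ hl] at hres
end

section
/- Let k ≥ 3 be an integer and μ a nonzero complex number. Consider the system of k−2 polynomial equations μ x_i^{k−1} = ∏_{j ∈ {1,…,k−2}, j ≠ i} x_j for i = 1, …, k−2, in x ∈ ℂ^{k−2} (empty products equal 1). Then the set of nonzero solutions x ∈ ℂ^{k−2} of this system has exactly 2·k^{k−3} elements. -/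
open Finset

private lemma card_pow_eq_one_set (n : ℕ) (hn : 0 < n) :
    Nat.card {z : ℂ // z ^ n = 1} = n := by
  have h : {z : ℂ | z ^ n = 1} = ↑(Polynomial.nthRootsFinset n (1 : ℂ)) := by
    ext z
    simp [Polynomial.mem_nthRootsFinset hn]
  have h2 : Nat.card {z : ℂ // z ^ n = 1} = ({z : ℂ | z ^ n = 1}).ncard :=
    (Nat.card_coe_set_eq _)
  rw [h2, h, Set.ncard_coe_finset,
    (Complex.isPrimitiveRoot_exp n hn.ne').card_nthRootsFinset]

private lemma coords_ne_zero {m : ℕ} {μ : ℂ} (hμ : μ ≠ 0) {x : Fin (m + 1) → ℂ}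
    (hx : x ≠ 0)
    (heq : ∀ i, μ * x i ^ (m + 2) = ∏ j ∈ Finset.univ.erase i, x j) :
    ∀ i, x i ≠ 0 := by
  by_contra h
  push_neg at h
  obtain ⟨i, hi⟩ := h
  have h0 : ∏ j ∈ Finset.univ.erase i, x j = 0 := by
    rw [← heq i, hi, zero_pow (by omega), mul_zero]
  obtain ⟨j, hjmem, hj⟩ := Finset.prod_eq_zero_iff.mp h0
  have hji : j ≠ i := (Finset.mem_erase.mp hjmem).1
  have hall : ∀ l, x l = 0 := by
    intro l
    have ht : ∃ t, t ≠ l ∧ x t = 0 := by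
      rcases eq_or_ne j l with rfl | hne
      · exact ⟨i, fun h => hji h.symm, hi⟩
      · exact ⟨j, hne, hj⟩
    obtain ⟨t, htl, hxt⟩ := ht
    have hp : ∏ j' ∈ Finset.univ.erase l, x j' = 0 :=
      Finset.prod_eq_zero (Finset.mem_erase.mpr ⟨htl, Finset.mem_univ t⟩) hxt
    have := (heq l).trans hp
    have hx0 : x l ^ (m + 2) = 0 := by
      rcases mul_eq_zero.mp this with h' | h'
      · exact absurd h' hμ
      · exact h'
    exact pow_eq_zero_iff (by omega) |>.mp hx0
  exact hx (funext fun l => hall l)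

private lemma aux (m : ℕ) (μ : ℂ) (hμ : μ ≠ 0) :
    {x : Fin (m + 1) → ℂ | x ≠ 0 ∧
        ∀ i, μ * x i ^ (m + 2) = ∏ j ∈ Finset.univ.erase i, x j}.ncard
      = 2 * (m + 3) ^ m := by
  classical
  set S := {x : Fin (m + 1) → ℂ | x ≠ 0 ∧
        ∀ i, μ * x i ^ (m + 2) = ∏ j ∈ Finset.univ.erase i, x j} with hS
  -- nonvanishing of products of roots of unity
  have hηne : ∀ (η : {i : Fin (m+1) // i ≠ 0} → {z : ℂ // z ^ (m+3) = 1}),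
      (∏ i, (η i : ℂ)) ≠ 0 := by
    intro η
    refine Finset.prod_ne_zero_iff.mpr fun i _ h0 => ?_
    have h1 := (η i).2
    rw [h0, zero_pow (by omega)] at h1
    exact zero_ne_one h1
  have hex : ∀ (η : {i : Fin (m+1) // i ≠ 0} → {z : ℂ // z ^ (m+3) = 1}),
      ∃ z : ℂ, z ^ 2 = (∏ i, (η i : ℂ)) / μ :=
    fun η => IsAlgClosed.exists_pow_nat_eq _ (by norm_num)
  choose s hs using hex
  have hsne : ∀ η, s η ≠ 0 := by
    intro η h0
    have h1 := hs η
    rw [h0, zero_pow (by norm_num)] at h1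
    rcases div_eq_zero_iff.mp h1.symm with h | h
    · exact hηne η h
    · exact hμ h
  have hPη : ∀ η, (∏ i, (η i : ℂ)) = μ * s η ^ 2 := by
    intro η
    rw [hs η, mul_div_cancel₀ _ hμ]
  -- the extension of η to all coordinates
  set ζ : ({i : Fin (m+1) // i ≠ 0} → {z : ℂ // z ^ (m+3) = 1}) → Fin (m+1) → ℂ :=
    fun η i => if h : i = 0 then 1 else (η ⟨i, h⟩ : ℂ) with hζ
  have hζ0 : ∀ η, ζ η 0 = 1 := fun η => dif_pos rfl
  have hζsub : ∀ η (i : {i : Fin (m+1) // i ≠ 0}), ζ η i = (η i : ℂ) := by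
    intro η i
    simp only [hζ, dif_neg i.2]
  have hζpow : ∀ η i, ζ η i ^ (m + 3) = 1 := by
    intro η i
    by_cases h : i = 0
    · subst h; rw [hζ0, one_pow]
    · rw [show (i : Fin (m+1)) = ((⟨i, h⟩ : {i : Fin (m+1) // i ≠ 0}) : Fin (m+1)) from rfl,
        hζsub]
      exact (η ⟨i, h⟩).2
  have hζne : ∀ η i, ζ η i ≠ 0 := by
    intro η i h0
    have h1 := hζpow η i
    rw [h0, zero_pow (by omega)] at h1
    exact zero_ne_one h1
  have hζprod : ∀ η, ∏ j, ζ η j = ∏ i, (η i : ℂ) := by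
    intro η
    rw [← Finset.mul_prod_erase Finset.univ (ζ η) (Finset.mem_univ 0), hζ0, one_mul,
      Finset.prod_subtype (Finset.univ.erase 0) (p := fun i => i ≠ 0)
        (fun i => by simp) (ζ η)]
    exact Finset.prod_congr rfl fun i _ => hζsub η i
  have hcard_erase : ∀ i : Fin (m+1), (Finset.univ.erase i).card = m := by
    intro i
    rw [Finset.card_erase_of_mem (Finset.mem_univ i), Finset.card_univ, Fintype.card_fin]
    omega
  -- the parametrization map
  set f : (({i : Fin (m+1) // i ≠ 0} → {z : ℂ // z ^ (m+3) = 1}) × {d : ℂ // d ^ 2 = 1}) →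
      (Fin (m+1) → ℂ) := fun p i => (p.2 : ℂ) * s p.1 * ζ p.1 i with hf
  have hdne : ∀ d : {d : ℂ // d ^ 2 = 1}, (d : ℂ) ≠ 0 := by
    intro d h0
    have h1 := d.2
    rw [h0, zero_pow (by norm_num)] at h1
    exact zero_ne_one h1
  have hmem : ∀ p, f p ∈ S := by
    rintro ⟨η, d⟩
    have hcne : (d : ℂ) * s η ≠ 0 := mul_ne_zero (hdne d) (hsne η)
    constructor
    · intro h0
      have h1 := congrFun h0 0
      simp only [hf, Pi.zero_apply] at h1
      exact mul_ne_zero hcne (hζne η 0) h1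
    · intro i
      simp only [hf]
      apply mul_right_cancel₀ (hζne η i)
      have hkey : μ * ((d : ℂ) * s η) ^ (m + 2) = ((d : ℂ) * s η) ^ m * (μ * s η ^ 2) := by
        rw [mul_pow, mul_pow, pow_add (d : ℂ) m 2, d.2, mul_one, pow_add (s η) m 2]
        ring
      calc μ * ((d : ℂ) * s η * ζ η i) ^ (m + 2) * ζ η i
          = μ * ((d : ℂ) * s η) ^ (m + 2) * (ζ η i ^ (m + 2) * ζ η i) := by
            rw [mul_pow]; ring
        _ = μ * ((d : ℂ) * s η) ^ (m + 2) * ζ η i ^ (m + 3) := by rw [← pow_succ]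
        _ = ((d : ℂ) * s η) ^ m * (μ * s η ^ 2) := by rw [hζpow, mul_one, hkey]
        _ = ((d : ℂ) * s η) ^ m * ∏ j, ζ η j := by rw [hζprod, hPη]
        _ = ((d : ℂ) * s η) ^ m * ((∏ j ∈ Finset.univ.erase i, ζ η j) * ζ η i) := by
            rw [Finset.prod_erase_mul Finset.univ (ζ η) (Finset.mem_univ i)]
        _ = (∏ j ∈ Finset.univ.erase i, ((d : ℂ) * s η * ζ η j)) * ζ η i := by
            rw [Finset.prod_mul_distrib, Finset.prod_const, hcard_erase]
            ring
  have hinj : Function.Injective f := by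
    rintro ⟨η, d⟩ ⟨η', d'⟩ hfe
    have h0 := congrFun hfe 0
    simp only [hf, hζ0, mul_one] at h0
    have hcne : (d : ℂ) * s η ≠ 0 := mul_ne_zero (hdne d) (hsne η)
    have hηeq : η = η' := by
      funext i
      have hi := congrFun hfe (i : Fin (m+1))
      simp only [hf, hζsub] at hi
      rw [← h0] at hi
      exact Subtype.ext (mul_left_cancel₀ hcne hi)
    subst hηeq
    have hd : (d : ℂ) = d' := mul_right_cancel₀ (hsne η) h0
    simp only [Prod.mk.injEq]
    exact ⟨trivial, Subtype.ext hd⟩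
  have hsurj : ∀ x ∈ S, ∃ p, f p = x := by
    rintro x ⟨hx0, heqn⟩
    have hne := coords_ne_zero hμ hx0 heqn
    have hpow : ∀ i, x i ^ (m + 3) = x 0 ^ (m + 3) := by
      have hall : ∀ i, μ * x i ^ (m + 3) = ∏ j, x j := by
        intro i
        calc μ * x i ^ (m + 3) = x i * (μ * x i ^ (m + 2)) := by ring
          _ = x i * ∏ j ∈ Finset.univ.erase i, x j := by rw [heqn i]
          _ = ∏ j, x j := Finset.mul_prod_erase Finset.univ x (Finset.mem_univ i)
      intro i
      exact mul_left_cancel₀ hμ ((hall i).trans (hall 0).symm)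
    set η : {i : Fin (m+1) // i ≠ 0} → {z : ℂ // z ^ (m+3) = 1} :=
      fun i => ⟨x i / x 0, by
        rw [div_pow, hpow, div_self (pow_ne_zero _ (hne 0))]⟩ with hηdef
    have hPx : (∏ i, (η i : ℂ)) = μ * x 0 ^ 2 := by
      have h1 : (∏ i, (η i : ℂ)) = (∏ i : {i : Fin (m+1) // i ≠ 0}, x i) / x 0 ^ m := by
        rw [Finset.prod_div_distrib, Finset.prod_const, Finset.card_univ]
        congr 1
        simp [Fintype.card_subtype_compl]
      have h2 : (∏ i : {i : Fin (m+1) // i ≠ 0}, x (i : Fin (m+1)))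
          = ∏ j ∈ Finset.univ.erase 0, x j :=
        (Finset.prod_subtype (Finset.univ.erase 0) (p := fun i => i ≠ 0)
          (fun i => by simp) x).symm
      rw [h1, h2, ← heqn 0, div_eq_iff (pow_ne_zero m (hne 0)), pow_add]
      ring
    have hd2 : (x 0 / s η) ^ 2 = 1 := by
      rw [div_pow, hs η, hPx]
      field_simp
      exact div_self (hne 0)
    refine ⟨⟨η, ⟨x 0 / s η, hd2⟩⟩, ?_⟩
    funext i
    simp only [hf]
    rw [div_mul_cancel₀ _ (hsne η)]
    by_cases h : i = 0
    · subst h; rw [hζ0, mul_one]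
    · rw [show (i : Fin (m+1)) = ((⟨i, h⟩ : {i : Fin (m+1) // i ≠ 0}) : Fin (m+1)) from rfl,
        hζsub]
      simp only [hηdef]
      rw [mul_div_cancel₀ _ (hne 0)]
  -- counting
  have hbij : Function.Bijective (fun p => (⟨f p, hmem p⟩ : S)) := by
    constructor
    · intro p q hpq
      exact hinj (congrArg Subtype.val hpq)
    · rintro ⟨x, hx⟩
      obtain ⟨p, hp⟩ := hsurj x hx
      exact ⟨p, Subtype.ext hp⟩
  have hcardS : Nat.card S =
      Nat.card (({i : Fin (m+1) // i ≠ 0} → {z : ℂ // z ^ (m+3) = 1}) × {d : ℂ // d ^ 2 = 1}) :=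
    (Nat.card_eq_of_bijective _ hbij).symm
  have hsubcard : Nat.card {i : Fin (m+1) // i ≠ 0} = m := by
    rw [Nat.card_eq_fintype_card]
    simp [Fintype.card_subtype_compl]
  rw [← Nat.card_coe_set_eq, hcardS, Nat.card_prod, Nat.card_fun,
    card_pow_eq_one_set (m + 3) (by omega), card_pow_eq_one_set 2 (by norm_num),
    hsubcard, mul_comm]

/-- For `k ≥ 3` and `μ ≠ 0`, the system
`μ x_i^{k−1} = ∏_{j ≠ i} x_j` (`i = 1, …, k−2`) has exactly `2·k^{k−3}` nonzero solutions
in `ℂ^{k−2}`. -/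
theorem card_nonzero_solutions_km2
    (k : ℕ) (hk : 3 ≤ k) (μ : ℂ) (hμ : μ ≠ 0) :
    {x : Fin (k - 2) → ℂ | x ≠ 0 ∧
        ∀ i, μ * x i ^ (k - 1) = ∏ j ∈ Finset.univ.erase i, x j}.ncard
      = 2 * k ^ (k - 3) := by
  obtain ⟨m, rfl⟩ : ∃ m, k = m + 3 := ⟨k - 3, by omega⟩
  have h1 : m + 3 - 2 = m + 1 := by omega
  have h2 : m + 3 - 1 = m + 2 := by omega
  have h3 : m + 3 - 3 = m := by omega
  simp only [h1, h2, h3]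
  exact aux m μ hμ
end

section
/- Let k ≥ 3 be an integer and μ a nonzero complex number. Let p ∈ ℂ^{k−2} be a nonzero solution of the system μ x_i^{k−1} = ∏_{j ∈ {1,…,k−2}, j ≠ i} x_j (i = 1, …, k−2). Then the (k−2)×(k−2) Jacobian matrix J of this system at p, given by J_{ii} = (k−1) μ p_i^{k−2} and J_{ij} = −∏_{l ∈ {1,…,k−2}, l ≠ i, l ≠ j} p_l for i ≠ j, is invertible. -/
open Finset

/-- The Jacobian matrix of the system `μ x_i^{k−1} = ∏_{j ≠ i} x_j`
(`i = 1, …, k−2`) at any nonzero solution `p` is invertible. -/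
theorem jacobian_invertible_at_nonzero_solution
    (k : ℕ) (hk : 3 ≤ k) (μ : ℂ) (hμ : μ ≠ 0) (p : Fin (k - 2) → ℂ) (hp : p ≠ 0)
    (hsol : ∀ i, μ * p i ^ (k - 1) = ∏ j ∈ Finset.univ.erase i, p j) :
    IsUnit (Matrix.of fun i j : Fin (k - 2) =>
      if i = j then (k - 1 : ℂ) * μ * p i ^ (k - 2)
      else -∏ l ∈ (Finset.univ.erase i).erase j, p l) := by
  have hall : ∀ i, p i ≠ 0 := by
    intro i hi
    apply hp
    funext j
    rcases eq_or_ne j i with rfl | hji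
    · exact hi
    · have h0 : μ * p j ^ (k - 1) = 0 := by
        rw [hsol j]
        exact Finset.prod_eq_zero (Finset.mem_erase.mpr ⟨Ne.symm hji, Finset.mem_univ i⟩) hi
      have hk1 : k - 1 ≠ 0 := by omega
      have := (mul_eq_zero.mp h0).resolve_left hμ
      simpa [pow_eq_zero_iff hk1] using this
  set P : ℂ := ∏ l, p l with hPdef
  have hP : P ≠ 0 := Finset.prod_ne_zero_iff.mpr fun l _ => hall l
  have hk0 : (k : ℂ) ≠ 0 := Nat.cast_ne_zero.mpr (by omega)
  have h1 : ∀ i : Fin (k - 2), p i * ∏ l ∈ Finset.univ.erase i, p l = P :=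
    fun i => Finset.mul_prod_erase Finset.univ p (Finset.mem_univ i)
  have h2 : ∀ i l : Fin (k - 2), l ≠ i →
      (∏ x ∈ (Finset.univ.erase i).erase l, p x) * p l * p i = P := by
    intro i l hli
    have hmem : l ∈ Finset.univ.erase i := Finset.mem_erase.mpr ⟨hli, Finset.mem_univ l⟩
    have h := Finset.mul_prod_erase (Finset.univ.erase i) p hmem
    calc (∏ x ∈ (Finset.univ.erase i).erase l, p x) * p l * p i
        = p i * (p l * ∏ x ∈ (Finset.univ.erase i).erase l, p x) := by ring
      _ = p i * ∏ x ∈ Finset.univ.erase i, p x := by rw [h]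
      _ = P := h1 i
  have hkey : ∀ i : Fin (k - 2), μ * p i ^ (k - 2) * (p i * p i) = P := by
    intro i
    have hpow : p i ^ (k - 2) * (p i * p i) = p i ^ (k - 1) * p i := by
      have e1 : k - 2 + 1 = k - 1 := by omega
      rw [← mul_assoc, ← pow_succ, e1]
    calc μ * p i ^ (k - 2) * (p i * p i) = μ * (p i ^ (k - 2) * (p i * p i)) := by ring
      _ = μ * p i ^ (k - 1) * p i := by rw [hpow]; ring
      _ = (∏ l ∈ Finset.univ.erase i, p l) * p i := by rw [hsol i]
      _ = P := by rw [mul_comm, h1 i]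
  set J : Matrix (Fin (k - 2)) (Fin (k - 2)) ℂ := Matrix.of fun i j : Fin (k - 2) =>
      if i = j then (k - 1 : ℂ) * μ * p i ^ (k - 2)
      else -∏ l ∈ (Finset.univ.erase i).erase j, p l with hJ
  set B : Matrix (Fin (k - 2)) (Fin (k - 2)) ℂ := Matrix.of fun l j : Fin (k - 2) =>
      p l * p j * (if l = j then (3 : ℂ) else 1) / (2 * k * P) with hB
  have hcard : (Finset.univ : Finset (Fin (k - 2))).card = k - 2 := by
    simp
  have hJB : J * B = 1 := by
    ext i j
    rw [Matrix.mul_apply, Matrix.one_apply]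
    rw [← Finset.add_sum_erase _ _ (Finset.mem_univ i)]
    rcases eq_or_ne i j with rfl | hij
    · rw [if_pos rfl]
      have hconst : ∀ l ∈ Finset.univ.erase i, J i l * B l i = -(2 * (k : ℂ))⁻¹ := by
        intro l hl
        have hli : l ≠ i := (Finset.mem_erase.mp hl).1
        have hQ := h2 i l hli
        simp only [hJ, hB, Matrix.of_apply, if_neg (Ne.symm hli), if_neg hli]
        field_simp
        linear_combination (-1 : ℂ) * hQ
      rw [Finset.sum_congr rfl hconst, Finset.sum_const, Finset.card_erase_of_mem (Finset.mem_univ i), hcard]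
      simp only [hJ, hB, Matrix.of_apply, if_pos rfl]
      have hcast : ((k - 2 - 1 : ℕ) : ℂ) = (k : ℂ) - 3 := by
        have : k - 2 - 1 = k - 3 := by omega
        rw [this, Nat.cast_sub (by omega)]
        norm_num
      rw [nsmul_eq_mul, hcast]
      have hQ := hkey i
      field_simp
      simp only [↓reduceIte]
      linear_combination (3 * ((k : ℂ) - 1)) * hQ
    · rw [if_neg hij]
      have hjmem : j ∈ Finset.univ.erase i := Finset.mem_erase.mpr ⟨Ne.symm hij, Finset.mem_univ j⟩
      rw [← Finset.add_sum_erase _ _ hjmem]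
      have hk4 : 4 ≤ k := by
        have : Nontrivial (Fin (k - 2)) := ⟨i, j, hij⟩
        have := Fintype.one_lt_card (α := Fin (k - 2))
        simp only [Fintype.card_fin] at this
        omega
      have hconst : ∀ l ∈ (Finset.univ.erase i).erase j,
          J i l * B l j = -(p j / (2 * (k : ℂ) * p i)) := by
        intro l hl
        have hlj : l ≠ j := (Finset.mem_erase.mp hl).1
        have hli : l ≠ i := (Finset.mem_erase.mp (Finset.mem_erase.mp hl).2).1
        have hQ := h2 i l hli
        simp only [hJ, hB, Matrix.of_apply, if_neg (Ne.symm hli), if_neg hlj]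
        have hpi := hall i
        field_simp
        linear_combination (-p j) * hQ
      rw [Finset.sum_congr rfl hconst, Finset.sum_const,
        Finset.card_erase_of_mem hjmem, Finset.card_erase_of_mem (Finset.mem_univ i), hcard]
      simp only [hJ, hB, Matrix.of_apply, if_pos rfl, if_neg hij]
      have hcast : ((k - 2 - 1 - 1 : ℕ) : ℂ) = (k : ℂ) - 4 := by
        have : k - 2 - 1 - 1 = k - 4 := by omega
        rw [this, Nat.cast_sub (by omega)]
        norm_num
      rw [nsmul_eq_mul, hcast]
      have hQ1 := hkey i
      have hQ2 := h2 i j (Ne.symm hij)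
      have hpi := hall i
      field_simp
      simp only [↓reduceIte]
      linear_combination ((k : ℂ) - 1) * p j * hQ1 - 3 * p j * hQ2
  refine (Matrix.isUnit_iff_isUnit_det J).mpr (IsUnit.of_mul_eq_one B.det ?_)
  rw [← Matrix.det_mul, hJB, Matrix.det_one]
end

section
/- Let k ≥ 3 be an integer and μ a nonzero complex number. Consider the system of k−1 polynomial equations μ x_i^{k−1} = ∏_{j ∈ {1,…,k−1}, j ≠ i} x_j for i = 1, …, k−1, in x ∈ ℂ^{k−1}. Then the set of nonzero solutions x ∈ ℂ^{k−1} of this system has exactly k^{k−2} elements. -/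
open Finset

/-- For `k ≥ 3` and `μ ≠ 0`, the system
`μ x_i^{k−1} = ∏_{j ≠ i} x_j` (`i = 1, …, k−1`) has exactly `k^{k−2}` nonzero solutions
in `ℂ^{k−1}`. -/
theorem card_nonzero_solutions_km1
    (k : ℕ) (hk : 3 ≤ k) (μ : ℂ) (hμ : μ ≠ 0) :
    {x : Fin (k - 1) → ℂ | x ≠ 0 ∧
        ∀ i, μ * x i ^ (k - 1) = ∏ j ∈ Finset.univ.erase i, x j}.ncard
      = k ^ (k - 2) := by
  haveI : NeZero (k - 1) := ⟨by omega⟩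
  have hk0 : k ≠ 0 := by omega
  have hkpos : 0 < k := by omega
  have hm1 : (k - 1) + 1 = k := by omega
  have hpow : ∀ z : ℂ, z ^ k = z ^ (k - 1) * z := by
    intro z; rw [← pow_succ, hm1]
  set S : Set (Fin (k - 1) → ℂ) := {x | x ≠ 0 ∧
      ∀ i, μ * x i ^ (k - 1) = ∏ j ∈ Finset.univ.erase i, x j} with hS
  -- the target set of root tuples
  set T : Set (Fin (k - 1) → ℂ) := {ω | ω 0 = 1 ∧ ∀ i, ω i ^ k = 1} with hT
  -- the map
  set g : (Fin (k - 1) → ℂ) → (Fin (k - 1) → ℂ) :=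
    fun ω i => ω i * ((∏ j, ω j) / μ) with hg
  -- key: in S all coordinates are nonzero
  have hnz : ∀ x ∈ S, ∀ i, x i ≠ 0 := by
    intro x hx i hxi
    obtain ⟨hx0, hxeq⟩ := hx
    obtain ⟨l, hl⟩ : ∃ l, x l ≠ 0 := by
      by_contra h
      push_neg at h
      exact hx0 (funext h)
    have hil : i ≠ l := fun h => hl (h ▸ hxi)
    have := hxeq l
    rw [Finset.prod_eq_zero (Finset.mem_erase.2 ⟨hil, mem_univ i⟩) hxi] at this
    exact hl (pow_eq_zero_iff (by omega)|>.1 ((mul_eq_zero.1 this).resolve_left hμ))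
  -- key: μ * x i ^ k = ∏ x j for x ∈ S
  have hkey : ∀ x ∈ S, ∀ i, μ * x i ^ k = ∏ j, x j := by
    intro x hx i
    have h1 := hx.2 i
    have h2 : x i * (μ * x i ^ (k - 1)) = x i * ∏ j ∈ Finset.univ.erase i, x j := by
      rw [h1]
    rw [Finset.mul_prod_erase _ _ (mem_univ i)] at h2
    calc μ * x i ^ k = x i * (μ * x i ^ (k - 1)) := by
          rw [hpow]; ring
      _ = ∏ j, x j := h2
  have hbij : Set.BijOn g T S := by
    constructor
    · -- MapsTo
      intro ω hω
      obtain ⟨hω0, hωk⟩ := hω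
      have hωnz : ∀ i, ω i ≠ 0 := by
        intro i h
        have := hωk i
        rw [h, zero_pow hk0] at this
        exact zero_ne_one this
      set t : ℂ := (∏ j, ω j) / μ with ht
      have htnz : t ≠ 0 := div_ne_zero (Finset.prod_ne_zero_iff.2 fun i _ => hωnz i) hμ
      have hprodω : ∏ j, ω j = μ * t := by
        rw [ht]; field_simp
    -- prod of g ω
      have hprod : ∏ j, g ω j = μ * t ^ k := by
        rw [hg]
        simp only
        rw [Finset.prod_mul_distrib, Finset.prod_const, ← ht, hprodω,
          Finset.card_univ, Fintype.card_fin, hpow t]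
        ring
      constructor
      · intro h
        have : g ω 0 = 0 := by rw [h]; rfl
        rw [hg] at this
        simp only at this
        exact (mul_ne_zero (hωnz 0) htnz) this
      · intro i
        have hgnz : g ω i ≠ 0 := mul_ne_zero (hωnz i) htnz
        apply mul_left_cancel₀ hgnz
        rw [Finset.mul_prod_erase _ _ (mem_univ i), hprod]
        have : g ω i * (μ * g ω i ^ (k - 1)) = μ * g ω i ^ k := by
          rw [hpow]; ring
        rw [this, hg]
        simp only
        rw [mul_pow, hωk i, one_mul]
    · constructor
      · -- InjOn
        intro ω hω ω' hω' heq
        have h0 : (∏ j, ω j) / μ = (∏ j, ω' j) / μ := by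
          have := congrFun heq 0
          rw [hg] at this
          simpa [hω.1, hω'.1] using this
        have htnz : (∏ j, ω j) / μ ≠ 0 := by
          apply div_ne_zero _ hμ
          apply Finset.prod_ne_zero_iff.2
          intro i _ h
          have := hω.2 i
          rw [h, zero_pow hk0] at this
          exact zero_ne_one this
        funext i
        have := congrFun heq i
        rw [hg] at this
        simp only at this
        rw [← h0] at this
        exact mul_right_cancel₀ htnz this
      · -- SurjOn
        intro x hx
        have hxnz := hnz x hx
        have hxkey := hkey x hx
        refine ⟨fun i => x i / x 0, ⟨div_self (hxnz 0), fun i => ?_⟩, ?_⟩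
        · rw [div_pow]
          have h1 := hxkey i
          have h2 := hxkey 0
          rw [← h2] at h1
          have : x i ^ k = x 0 ^ k := mul_left_cancel₀ hμ h1
          rw [this, div_self (pow_ne_zero _ (hxnz 0))]
        · funext i
          rw [hg]
          simp only
          have hprodx : ∏ j, x j = μ * x 0 ^ k := (hxkey 0).symm
          have ht' : (∏ j, x j / x 0) / μ = x 0 := by
            rw [Finset.prod_div_distrib, Finset.prod_const, Finset.card_univ,
              Fintype.card_fin, hprodx, hpow (x 0)]
            rw [div_div, div_eq_iff (mul_ne_zero (pow_ne_zero _ (hxnz 0)) hμ)]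
            ring

          rw [ht', div_mul_cancel₀ _ (hxnz 0)]
  -- transfer cardinality
  have hcard : S.ncard = T.ncard := by
    rw [← hbij.image_eq, Set.ncard_image_of_injOn hbij.injOn]
  rw [hcard]
  -- compute the cardinality of T
  have hTF : T = ↑(Fintype.piFinset fun i : Fin (k - 1) =>
      if i = 0 then ({1} : Finset ℂ) else Polynomial.nthRootsFinset k (1 : ℂ)) := by
    ext ω
    simp only [hT, Set.mem_setOf_eq, Finset.coe_sort_coe, Finset.mem_coe,
      Fintype.mem_piFinset]
    constructor
    · rintro ⟨h0, hω⟩ i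
      by_cases hi : i = 0
      · simp [hi, h0]
      · simp only [hi, if_neg, if_false]
        rw [Polynomial.mem_nthRootsFinset hkpos (1 : ℂ)]
        exact hω i
    · intro h
      have h0 : ω 0 = 1 := by have := h 0; simpa using this
      refine ⟨h0, fun i => ?_⟩
      by_cases hi : i = 0
      · rw [hi, h0, one_pow]
      · have := h i
        simp only [hi, if_false] at this
        exact (Polynomial.mem_nthRootsFinset hkpos (1 : ℂ)).1 this
  rw [hTF, Set.ncard_coe_finset, Fintype.card_piFinset]
  have hcardroots : (Polynomial.nthRootsFinset k (1 : ℂ)).card = k :=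
    (Complex.isPrimitiveRoot_exp k hk0).card_nthRootsFinset
  rw [← Finset.mul_prod_erase _ _ (mem_univ (0 : Fin (k - 1))), if_pos rfl,
    Finset.prod_congr rfl (fun i hi => by
      rw [if_neg (Finset.mem_erase.1 hi).1, hcardroots]),
    Finset.prod_const, Finset.card_erase_of_mem (mem_univ _), Finset.card_univ,
    Fintype.card_fin, Finset.card_singleton, one_mul]
  rw [Nat.sub_sub]
end

section
/- Let G be a connected finite simple graph and π a sign function on G. Then ρ(G_π) ≤ ρ(G), with equality if and only if G_π is switching equivalent to G_+ (all signs +1) or to G_− (all signs −1). -/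
open Matrix Finset
open scoped Classical

noncomputable section AuxSection
open scoped InnerProductSpace
set_option linter.unusedSectionVars false
set_option maxHeartbeats 1000000

namespace SpecAux

variable {n : Type*} [Fintype n] [DecidableEq n] {A : Matrix n n ℝ}

/-- cast a plain vector into Euclidean space -/
def toE (x : n → ℝ) : EuclideanSpace ℝ n := (WithLp.equiv 2 _).symm x

lemma dot_eq_inner (x y : n → ℝ) : x ⬝ᵥ y = ⟪toE x, toE y⟫_ℝ := by
  simp [toE, PiLp.inner_apply, RCLike.inner_apply, dotProduct, mul_comm]

lemma toE_mulVec (A : Matrix n n ℝ) (x : n → ℝ) :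
    toE (A *ᵥ x) = Matrix.toEuclideanLin A (toE x) := rfl

lemma toE_smul (r : ℝ) (x : n → ℝ) : toE (r • x) = r • toE x := rfl

lemma toE_eq_zero {x : n → ℝ} : toE x = 0 ↔ x = 0 := by
  constructor
  · intro h; funext i; exact congrFun (congrArg (WithLp.equiv 2 (n → ℝ)) h) i
  · rintro rfl; rfl

lemma eigBasis_apply (hA : A.IsHermitian) (i : n) :
    Matrix.toEuclideanLin A (hA.eigenvectorBasis i) =
      hA.eigenvalues i • hA.eigenvectorBasis i := by
  have h := hA.mulVec_eigenvectorBasis i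
  apply (WithLp.equiv 2 (n → ℝ)).injective
  exact h

lemma repr_mulVec (hA : A.IsHermitian) (x : EuclideanSpace ℝ n) :
    Matrix.toEuclideanLin A x =
      ∑ i, (hA.eigenvalues i * ⟪hA.eigenvectorBasis i, x⟫_ℝ) • hA.eigenvectorBasis i := by
  set b := hA.eigenvectorBasis
  conv_lhs => rw [← b.sum_repr' x]
  rw [map_sum]
  refine Finset.sum_congr rfl fun i _ => ?_
  rw [_root_.map_smul, eigBasis_apply hA i, smul_smul, mul_comm]

lemma inner_sum_smul (hA : A.IsHermitian) (x : EuclideanSpace ℝ n) (d : n → ℝ) :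
    ⟪x, ∑ i, d i • hA.eigenvectorBasis i⟫_ℝ = ∑ i, d i * ⟪hA.eigenvectorBasis i, x⟫_ℝ := by
  rw [inner_sum]
  refine Finset.sum_congr rfl fun i _ => ?_
  rw [real_inner_smul_right, real_inner_comm]

lemma inner_mulVec_eq (hA : A.IsHermitian) (x : EuclideanSpace ℝ n) :
    ⟪x, Matrix.toEuclideanLin A x⟫_ℝ =
      ∑ i, hA.eigenvalues i * ⟪hA.eigenvectorBasis i, x⟫_ℝ ^ 2 := by
  rw [repr_mulVec hA, inner_sum_smul hA]
  refine Finset.sum_congr rfl fun i _ => ?_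
  ring

lemma inner_basis_basis (hA : A.IsHermitian) (i j : n) :
    ⟪hA.eigenvectorBasis i, hA.eigenvectorBasis j⟫_ℝ = if i = j then 1 else 0 :=
  orthonormal_iff_ite.mp hA.eigenvectorBasis.orthonormal i j

lemma inner_self_eq (hA : A.IsHermitian) (x : EuclideanSpace ℝ n) :
    ⟪x, x⟫_ℝ = ∑ i, ⟪hA.eigenvectorBasis i, x⟫_ℝ ^ 2 := by
  have h := inner_sum_smul hA x (fun i => ⟪hA.eigenvectorBasis i, x⟫_ℝ)
  rw [hA.eigenvectorBasis.sum_repr' x] at h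
  rw [h]
  refine Finset.sum_congr rfl fun i _ => ?_
  ring

lemma isEigenval_iff (hA : A.IsHermitian) {μ : ℝ} :
    IsEigenval A μ ↔ ∃ i, hA.eigenvalues i = μ := by
  constructor
  · rintro ⟨x, hx0, hxe⟩
    set b := hA.eigenvectorBasis
    have hX : Matrix.toEuclideanLin A (toE x) = μ • toE x := by
      rw [← toE_mulVec, hxe]; rfl
    by_contra hc
    push_neg at hc
    have hall : ∀ i, ⟪b i, toE x⟫_ℝ = 0 := by
      intro i
      have h1 : ⟪b i, Matrix.toEuclideanLin A (toE x)⟫_ℝ = μ * ⟪b i, toE x⟫_ℝ := by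
        rw [hX, real_inner_smul_right]
      have h2 : ⟪b i, Matrix.toEuclideanLin A (toE x)⟫_ℝ
          = hA.eigenvalues i * ⟪b i, toE x⟫_ℝ := by
        rw [repr_mulVec hA, inner_sum_smul hA (b i)]
        rw [Finset.sum_eq_single i]
        · rw [inner_basis_basis hA i i, if_pos rfl]; ring
        · intro j _ hj
          rw [inner_basis_basis hA j i, if_neg hj]; ring
        · intro h; exact absurd (Finset.mem_univ i) h
      have := h1.symm.trans h2
      have hne : hA.eigenvalues i - μ ≠ 0 := sub_ne_zero.mpr (hc i)
      have : (hA.eigenvalues i - μ) * ⟪b i, toE x⟫_ℝ = 0 := by linarith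
      exact (mul_eq_zero.mp this).resolve_left hne
    have : toE x = 0 := by
      rw [← b.sum_repr' (toE x)]
      refine Finset.sum_eq_zero fun i _ => by rw [hall i, zero_smul]
    exact hx0 (toE_eq_zero.mp this)
  · rintro ⟨i, rfl⟩
    refine ⟨hA.eigenvectorBasis i, ?_, hA.mulVec_eigenvectorBasis i⟩
    intro h
    exact hA.eigenvectorBasis.orthonormal.ne_zero i (toE_eq_zero.mpr h)


variable [Nonempty n]

lemma specRad_eq_sup (hA : A.IsHermitian) :
    specRad A = Finset.univ.sup' Finset.univ_nonempty (fun i => |hA.eigenvalues i|) := by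
  set M := Finset.univ.sup' Finset.univ_nonempty (fun i => |hA.eigenvalues i|) with hM
  have hub : ∀ r ∈ {r : ℝ | ∃ μ : ℝ, IsEigenval A μ ∧ r = |μ|}, r ≤ M := by
    rintro r ⟨μ, hμ, rfl⟩
    obtain ⟨i, rfl⟩ := (isEigenval_iff hA).mp hμ
    exact Finset.le_sup' (fun i => |hA.eigenvalues i|) (Finset.mem_univ i)
  obtain ⟨i0, -, hi0⟩ := Finset.exists_mem_eq_sup' Finset.univ_nonempty
    (fun i => |hA.eigenvalues i|)
  refine le_antisymm (csSup_le ?_ hub) (le_csSup ⟨M, hub⟩ ?_)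
  · exact ⟨|hA.eigenvalues i0|, hA.eigenvalues i0, (isEigenval_iff hA).mpr ⟨i0, rfl⟩, rfl⟩
  · exact ⟨hA.eigenvalues i0, (isEigenval_iff hA).mpr ⟨i0, rfl⟩, hi0⟩

lemma exists_eigen_specRad (hA : A.IsHermitian) :
    ∃ μ, IsEigenval A μ ∧ |μ| = specRad A := by
  obtain ⟨i0, -, hi0⟩ := Finset.exists_mem_eq_sup' Finset.univ_nonempty
    (fun i => |hA.eigenvalues i|)
  exact ⟨hA.eigenvalues i0, (isEigenval_iff hA).mpr ⟨i0, rfl⟩,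
    by rw [specRad_eq_sup hA, hi0]⟩

lemma abs_eigen_le (hA : A.IsHermitian) (i : n) : |hA.eigenvalues i| ≤ specRad A := by
  rw [specRad_eq_sup hA]; exact Finset.le_sup' (fun i => |hA.eigenvalues i|) (Finset.mem_univ i)

lemma rayleigh_le (hA : A.IsHermitian) (x : n → ℝ) :
    |x ⬝ᵥ A *ᵥ x| ≤ specRad A * (x ⬝ᵥ x) := by
  rw [dot_eq_inner, dot_eq_inner, toE_mulVec]
  rw [inner_mulVec_eq hA, inner_self_eq hA]
  calc |∑ i, hA.eigenvalues i * ⟪hA.eigenvectorBasis i, toE x⟫_ℝ ^ 2|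
      ≤ ∑ i, |hA.eigenvalues i * ⟪hA.eigenvectorBasis i, toE x⟫_ℝ ^ 2| :=
        Finset.abs_sum_le_sum_abs _ _
    _ ≤ ∑ i, specRad A * ⟪hA.eigenvectorBasis i, toE x⟫_ℝ ^ 2 := by
        refine Finset.sum_le_sum fun i _ => ?_
        rw [abs_mul, abs_pow, sq_abs]
        exact mul_le_mul_of_nonneg_right (abs_eigen_le hA i) (sq_nonneg _)
    _ = specRad A * ∑ i, ⟪hA.eigenvectorBasis i, toE x⟫_ℝ ^ 2 := by rw [Finset.mul_sum]

lemma rayleigh_eq (hA : A.IsHermitian) (x : n → ℝ)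
    (h : x ⬝ᵥ A *ᵥ x = specRad A * (x ⬝ᵥ x)) :
    A *ᵥ x = specRad A • x := by
  set b := hA.eigenvectorBasis
  set c := fun i => ⟪b i, toE x⟫_ℝ with hc
  set M := specRad A
  have key : ∀ i ∈ Finset.univ, (M - hA.eigenvalues i) * c i ^ 2 = 0 := by
    have hsum : ∑ i, (M - hA.eigenvalues i) * c i ^ 2 = 0 := by
      have h1 : x ⬝ᵥ A *ᵥ x = ∑ i, hA.eigenvalues i * c i ^ 2 := by
        rw [dot_eq_inner, toE_mulVec, inner_mulVec_eq hA]
      have h2 : x ⬝ᵥ x = ∑ i, c i ^ 2 := by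
        rw [dot_eq_inner, inner_self_eq hA]
      rw [h1, h2, Finset.mul_sum] at h
      have hd : ∑ i, (M - hA.eigenvalues i) * c i ^ 2
          = ∑ i, M * c i ^ 2 - ∑ i, hA.eigenvalues i * c i ^ 2 := by
        rw [← Finset.sum_sub_distrib]
        exact Finset.sum_congr rfl fun i _ => by ring
      rw [hd, ← h, sub_self]
    refine (Finset.sum_eq_zero_iff_of_nonneg fun i _ => ?_).mp hsum
    have hle : hA.eigenvalues i ≤ M := le_trans (le_abs_self _) (abs_eigen_le hA i)
    exact mul_nonneg (by linarith) (sq_nonneg _)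
  have hterm : ∀ i, (hA.eigenvalues i * c i) • (b i : EuclideanSpace ℝ n)
      = (M * c i) • (b i : EuclideanSpace ℝ n) := by
    intro i
    have := key i (Finset.mem_univ i)
    rcases mul_eq_zero.mp this with h1 | h2
    · rw [show hA.eigenvalues i = M from by linarith]
    · rw [pow_eq_zero_iff (by norm_num)] at h2
      rw [h2, mul_zero, mul_zero]
  have : toE (A *ᵥ x) = toE (M • x) := by
    rw [toE_mulVec, toE_smul, repr_mulVec hA]
    calc ∑ i, (hA.eigenvalues i * c i) • (b i : EuclideanSpace ℝ n)
        = ∑ i, (M * c i) • (b i : EuclideanSpace ℝ n) :=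
          Finset.sum_congr rfl fun i _ => hterm i
      _ = M • ∑ i, c i • (b i : EuclideanSpace ℝ n) := by
          rw [Finset.smul_sum]
          exact Finset.sum_congr rfl fun i _ => (smul_smul M (c i) (b i)).symm
      _ = M • toE x := by rw [b.sum_repr' (toE x)]
  exact (WithLp.equiv 2 (n → ℝ)).symm.injective this


omit [Nonempty n] in
lemma isEigenval_neg_iff {μ : ℝ} : IsEigenval (-A) μ ↔ IsEigenval A (-μ) := by
  constructor
  · rintro ⟨x, h0, he⟩
    rw [neg_mulVec] at he
    exact ⟨x, h0, by rw [neg_eq_iff_eq_neg.mp he, ← neg_smul]⟩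
  · rintro ⟨x, h0, he⟩
    exact ⟨x, h0, by rw [neg_mulVec, he, neg_smul, neg_neg]⟩

omit [Nonempty n] in
lemma specRad_neg : specRad (-A) = specRad A := by
  unfold specRad; congr 1; ext r
  simp only [Set.mem_setOf_eq]
  constructor
  · rintro ⟨μ, hμ, rfl⟩
    exact ⟨-μ, isEigenval_neg_iff.mp hμ, (abs_neg μ).symm⟩
  · rintro ⟨μ, hμ, rfl⟩
    exact ⟨-μ, isEigenval_neg_iff.mpr (by rwa [neg_neg]), (abs_neg μ).symm⟩

omit [Nonempty n] in
lemma diag_sq_one {d : n → ℝ} (hd : ∀ i, d i = 1 ∨ d i = -1) :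
    Matrix.diagonal d * Matrix.diagonal d = 1 := by
  rw [diagonal_mul_diagonal]
  have : (fun i => d i * d i) = fun _ => (1 : ℝ) :=
    funext fun i => by rcases hd i with h | h <;> rw [h] <;> norm_num
  rw [this, diagonal_one]

omit [Nonempty n] in
lemma isEigenval_switch {d : n → ℝ} (hd : ∀ i, d i = 1 ∨ d i = -1) {μ : ℝ}
    (h : IsEigenval A μ) : IsEigenval (Matrix.diagonal d * A * Matrix.diagonal d) μ := by
  obtain ⟨x, h0, he⟩ := h
  refine ⟨Matrix.diagonal d *ᵥ x, ?_, ?_⟩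
  · intro hz
    apply h0; funext i
    have := congrFun hz i
    rw [mulVec_diagonal] at this
    rcases mul_eq_zero.mp this with h1 | h2
    · rcases hd i with h | h <;> rw [h] at h1 <;> norm_num at h1
    · exact h2
  · calc (Matrix.diagonal d * A * Matrix.diagonal d) *ᵥ (Matrix.diagonal d *ᵥ x)
        = ((Matrix.diagonal d * A * Matrix.diagonal d) * Matrix.diagonal d) *ᵥ x :=
          mulVec_mulVec _ _ _
      _ = (Matrix.diagonal d * A) *ᵥ x := by
          rw [mul_assoc (Matrix.diagonal d * A), diag_sq_one hd, mul_one]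
      _ = Matrix.diagonal d *ᵥ (A *ᵥ x) := (mulVec_mulVec _ _ _).symm
      _ = μ • (Matrix.diagonal d *ᵥ x) := by rw [he, mulVec_smul]

omit [Nonempty n] in
lemma specRad_switch {d : n → ℝ} (hd : ∀ i, d i = 1 ∨ d i = -1) (A : Matrix n n ℝ) :
    specRad (Matrix.diagonal d * A * Matrix.diagonal d) = specRad A := by
  have hback : Matrix.diagonal d * (Matrix.diagonal d * A * Matrix.diagonal d)
      * Matrix.diagonal d = A := by
    rw [← mul_assoc, ← mul_assoc, diag_sq_one hd, one_mul, mul_assoc, diag_sq_one hd, mul_one]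
  unfold specRad; congr 1; ext r
  simp only [Set.mem_setOf_eq]
  constructor
  · rintro ⟨μ, hμ, rfl⟩
    exact ⟨μ, hback ▸ isEigenval_switch hd hμ, rfl⟩
  · rintro ⟨μ, hμ, rfl⟩
    exact ⟨μ, isEigenval_switch hd hμ, rfl⟩

end SpecAux

namespace GraphAux

variable {V : Type*} [Fintype V] [DecidableEq V] (G : SimpleGraph V)

lemma signedAdj_of_adj (π : G.edgeSet → ℤˣ) {i j : V} (h : G.Adj i j) :
    signedAdj G π i j = ((π ⟨s(i, j), (G.mem_edgeSet).mpr h⟩ : ℤ) : ℝ) := dif_pos h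

lemma signedAdj_of_not_adj (π : G.edgeSet → ℤˣ) {i j : V} (h : ¬ G.Adj i j) :
    signedAdj G π i j = 0 := dif_neg h

lemma pi_val (π : G.edgeSet → ℤˣ) (e : G.edgeSet) :
    ((π e : ℤ) : ℝ) = 1 ∨ ((π e : ℤ) : ℝ) = -1 := by
  rcases Int.units_eq_one_or (π e) with h | h <;> rw [h] <;> norm_num

lemma one_adj {i j : V} (h : G.Adj i j) : signedAdj G (fun _ => (1 : ℤˣ)) i j = 1 := by
  rw [signedAdj_of_adj G _ h]; norm_num

lemma one_nonneg (i j : V) : 0 ≤ signedAdj G (fun _ => (1 : ℤˣ)) i j := by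
  by_cases h : G.Adj i j
  · rw [one_adj G h]; norm_num
  · rw [signedAdj_of_not_adj G _ h]

lemma abs_signedAdj (π : G.edgeSet → ℤˣ) (i j : V) :
    |signedAdj G π i j| = signedAdj G (fun _ => (1 : ℤˣ)) i j := by
  by_cases h : G.Adj i j
  · rw [signedAdj_of_adj G _ h, one_adj G h]
    rcases pi_val G π _ with hh | hh <;> rw [hh] <;> norm_num
  · rw [signedAdj_of_not_adj G _ h, signedAdj_of_not_adj G _ h, abs_zero]

lemma abs_signedAdj_one {i j : V} (π : G.edgeSet → ℤˣ) (h : G.Adj i j) :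
    |signedAdj G π i j| = 1 := by rw [abs_signedAdj G π, one_adj G h]

lemma signedAdj_isHermitian (π : G.edgeSet → ℤˣ) : (signedAdj G π).IsHermitian := by
  ext i j
  rw [Matrix.conjTranspose_apply, star_trivial]
  by_cases h : G.Adj i j
  · rw [signedAdj_of_adj G _ h.symm, signedAdj_of_adj G _ h]
    have : (⟨s(j, i), (G.mem_edgeSet).mpr h.symm⟩ : G.edgeSet)
        = ⟨s(i, j), (G.mem_edgeSet).mpr h⟩ := Subtype.ext (Sym2.eq_swap)
    rw [this]
  · rw [signedAdj_of_not_adj G _ (fun hh => h hh.symm), signedAdj_of_not_adj G _ h]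

lemma signedAdj_neg_one :
    signedAdj G (fun _ => (-1 : ℤˣ)) = -(signedAdj G (fun _ => (1 : ℤˣ))) := by
  ext i j
  rw [Matrix.neg_apply]
  by_cases h : G.Adj i j
  · rw [signedAdj_of_adj G _ h, one_adj G h]; norm_num
  · rw [signedAdj_of_not_adj G _ h, signedAdj_of_not_adj G _ h, neg_zero]

lemma grho_eq : grho G = specRad (signedAdj G (fun _ => (1 : ℤˣ))) := by
  unfold grho
  congr 1
  ext i j
  by_cases h : G.Adj i j
  · rw [SimpleGraph.adjMatrix_apply, if_pos h, one_adj G h]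
  · rw [SimpleGraph.adjMatrix_apply, if_neg h, signedAdj_of_not_adj G _ h]

lemma dot_mulVec_expand (M : Matrix V V ℝ) (x : V → ℝ) :
    x ⬝ᵥ M *ᵥ x = ∑ i, ∑ j, x i * (M i j * x j) := by
  simp [dotProduct, Matrix.mulVec, Finset.mul_sum]

lemma dot_self_pos {x : V → ℝ} (hx : x ≠ 0) : 0 < x ⬝ᵥ x := by
  obtain ⟨i0, hi0⟩ := Function.ne_iff.mp hx
  refine Finset.sum_pos' (fun i _ => mul_self_nonneg (x i))
    ⟨i0, Finset.mem_univ i0, mul_self_pos.mpr hi0⟩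

end GraphAux

end AuxSection

/-- For a connected graph `G` and any signing `π`, `ρ(G_π) ≤ ρ(G)`, with
equality iff `G_π` is switching equivalent to the all-`+1` or the all-`−1` signing. -/
theorem specRad_signed_le_and_eq_iff
    {V : Type*} [Fintype V] [DecidableEq V] (G : SimpleGraph V)
    (hG : G.Connected) (π : G.edgeSet → ℤˣ) :
    specRad (signedAdj G π) ≤ grho G ∧
      (specRad (signedAdj G π) = grho G ↔
        SwitchEquiv (signedAdj G π) (signedAdj G fun _ => 1) ∨
        SwitchEquiv (signedAdj G π) (signedAdj G fun _ => -1)) := by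
  classical
  have hne : Nonempty V := hG.nonempty
  set Aπ := signedAdj G π with hAπdef
  set N := signedAdj G (fun _ => (1 : ℤˣ)) with hNdef
  have hπH : Aπ.IsHermitian := GraphAux.signedAdj_isHermitian G π
  have hNH : N.IsHermitian := GraphAux.signedAdj_isHermitian G _
  have hgr : grho G = specRad N := GraphAux.grho_eq G
  obtain ⟨μ, hμEV, hμabs⟩ := SpecAux.exists_eigen_specRad hπH
  obtain ⟨x, hx0, hxe⟩ := hμEV
  set y : V → ℝ := fun i => |x i| with hy
  have hxx : 0 < x ⬝ᵥ x := GraphAux.dot_self_pos hx0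
  have hyy : y ⬝ᵥ y = x ⬝ᵥ x :=
    Finset.sum_congr rfl fun i _ => abs_mul_abs_self (x i)
  have hXA : x ⬝ᵥ Aπ *ᵥ x = μ * (x ⬝ᵥ x) := by
    rw [hxe, dotProduct_smul, smul_eq_mul]
  have hterm : ∀ i j, |x i * (Aπ i j * x j)| = y i * (N i j * y j) := by
    intro i j
    rw [abs_mul, abs_mul, GraphAux.abs_signedAdj]
  have hS : ∑ i, ∑ j, y i * (N i j * y j) = y ⬝ᵥ N *ᵥ y :=
    (GraphAux.dot_mulVec_expand N y).symm
  have habs_eq : ∑ i, ∑ j, |x i * (Aπ i j * x j)| = y ⬝ᵥ N *ᵥ y := by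
    rw [← hS]
    exact Finset.sum_congr rfl fun i _ => Finset.sum_congr rfl fun j _ => hterm i j
  have hchain : |μ| * (x ⬝ᵥ x) ≤ y ⬝ᵥ N *ᵥ y := by
    calc |μ| * (x ⬝ᵥ x) = |μ * (x ⬝ᵥ x)| := by
          rw [abs_mul, abs_of_pos hxx]
      _ = |x ⬝ᵥ Aπ *ᵥ x| := by rw [hXA]
      _ = |∑ i, ∑ j, x i * (Aπ i j * x j)| := by rw [GraphAux.dot_mulVec_expand]
      _ ≤ ∑ i, |∑ j, x i * (Aπ i j * x j)| := Finset.abs_sum_le_sum_abs _ _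
      _ ≤ ∑ i, ∑ j, |x i * (Aπ i j * x j)| :=
          Finset.sum_le_sum fun i _ => Finset.abs_sum_le_sum_abs _ _
      _ = y ⬝ᵥ N *ᵥ y := habs_eq
  have hNy : y ⬝ᵥ N *ᵥ y ≤ specRad N * (x ⬝ᵥ x) := by
    calc y ⬝ᵥ N *ᵥ y ≤ |y ⬝ᵥ N *ᵥ y| := le_abs_self _
      _ ≤ specRad N * (y ⬝ᵥ y) := SpecAux.rayleigh_le hNH y
      _ = specRad N * (x ⬝ᵥ x) := by rw [hyy]
  have hle : specRad Aπ ≤ specRad N := by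
    rw [← hμabs]
    exact le_of_mul_le_mul_right (hchain.trans hNy) hxx
  refine ⟨hgr ▸ hle, ?_, ?_⟩
  · -- equality implies switching equivalence
    intro heq
    have hρμ : |μ| = specRad N := by rw [hμabs, heq, hgr]
    have E1 : y ⬝ᵥ N *ᵥ y = specRad N * (y ⬝ᵥ y) := by
      rw [hyy]
      exact le_antisymm hNy (by rw [← hρμ]; exact hchain)
    have Eeig : N *ᵥ y = specRad N • y := SpecAux.rayleigh_eq hNH y E1
    have hzero : ∀ i j, G.Adj i j → x i = 0 → x j = 0 := by
      intro i j hij hxi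
      have h1 : (N *ᵥ y) i = 0 := by
        rw [Eeig, Pi.smul_apply, smul_eq_mul]
        simp [hy, hxi]
      have h2 : ∑ k, N i k * y k = 0 := h1
      have h3 := (Finset.sum_eq_zero_iff_of_nonneg fun k _ =>
        mul_nonneg (GraphAux.one_nonneg G i k) (abs_nonneg (x k))).mp h2 j (Finset.mem_univ j)
      rw [GraphAux.one_adj G hij, one_mul] at h3
      exact abs_eq_zero.mp h3
    have walklem : ∀ {u v : V}, G.Walk u v → x u ≠ 0 → x v ≠ 0 := by
      intro u v w
      induction w with
      | nil => exact id
      | cons h p ih =>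
        intro hu
        exact ih fun hmid => hu (hzero _ _ h.symm hmid)
    have hnz : ∀ i, x i ≠ 0 := by
      obtain ⟨i0, hi0⟩ := Function.ne_iff.mp hx0
      exact fun v => (hG.preconnected i0 v).elim fun w => walklem w hi0
    have hsumt : ∑ i, ∑ j, x i * (Aπ i j * x j) = μ * (x ⬝ᵥ x) := by
      rw [← GraphAux.dot_mulVec_expand, hXA]
    have habs_sum : ∑ i, ∑ j, |x i * (Aπ i j * x j)| = |μ| * (x ⬝ᵥ x) := by
      rw [habs_eq, E1, hyy, hρμ]
    set ε : ℝ := if 0 ≤ μ then 1 else -1 with hε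
    have hεμ : ε * μ = |μ| := by
      by_cases h : 0 ≤ μ
      · rw [hε, if_pos h, one_mul, abs_of_nonneg h]
      · rw [hε, if_neg h, abs_of_neg (lt_of_not_ge h)]; ring
    have hεabs : |ε| = 1 := by
      by_cases h : 0 ≤ μ
      · rw [hε, if_pos h, abs_one]
      · rw [hε, if_neg h]; norm_num
    have htermeq : ∀ i j, ε * (x i * (Aπ i j * x j)) = |x i * (Aπ i j * x j)| := by
      have hsum0 : ∑ i, ∑ j,
          (|x i * (Aπ i j * x j)| - ε * (x i * (Aπ i j * x j))) = 0 := by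
        have expand : ∑ i, ∑ j,
            (|x i * (Aπ i j * x j)| - ε * (x i * (Aπ i j * x j)))
            = (∑ i, ∑ j, |x i * (Aπ i j * x j)|)
              - ε * (∑ i, ∑ j, x i * (Aπ i j * x j)) := by
          rw [Finset.mul_sum, ← Finset.sum_sub_distrib]
          refine Finset.sum_congr rfl fun i _ => ?_
          rw [Finset.mul_sum, ← Finset.sum_sub_distrib]
        rw [expand, habs_sum, hsumt, ← mul_assoc, hεμ, sub_self]
      have hnneg : ∀ i j, 0 ≤ |x i * (Aπ i j * x j)| - ε * (x i * (Aπ i j * x j)) := by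
        intro i j
        have : ε * (x i * (Aπ i j * x j)) ≤ |ε * (x i * (Aπ i j * x j))| := le_abs_self _
        rw [abs_mul, hεabs, one_mul] at this
        linarith
      intro i j
      have houter := (Finset.sum_eq_zero_iff_of_nonneg fun i _ =>
        Finset.sum_nonneg fun j _ => hnneg i j).mp hsum0 i (Finset.mem_univ i)
      have hinner := (Finset.sum_eq_zero_iff_of_nonneg fun j _ =>
        hnneg i j).mp houter j (Finset.mem_univ j)
      linarith
    set d : V → ℝ := fun i => if 0 ≤ x i then 1 else -1 with hd
    have hdpm : ∀ i, d i = 1 ∨ d i = -1 := fun i => by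
      by_cases h : 0 ≤ x i
      · exact Or.inl (by rw [hd]; exact if_pos h)
      · exact Or.inr (by rw [hd]; exact if_neg h)
    have hdx : ∀ i, d i * x i = |x i| := by
      intro i
      by_cases h : 0 ≤ x i
      · rw [hd]; simp only [if_pos h, one_mul]; exact (abs_of_nonneg h).symm
      · rw [hd]; simp only [if_neg h]
        rw [abs_of_neg (lt_of_not_ge h)]; ring
    have hedge : ∀ i j, G.Adj i j → d i * (Aπ i j * d j) = ε := by
      intro i j hij
      have hxij : x i * x j ≠ 0 := mul_ne_zero (hnz i) (hnz j)
      have haabs : |Aπ i j| = 1 := GraphAux.abs_signedAdj_one G π hij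
      have ha2 : Aπ i j * Aπ i j = 1 := by
        rw [← abs_mul_abs_self, haabs, one_mul]
      have key : ε * Aπ i j * (x i * x j) = (d i * d j) * (x i * x j) := by
        calc ε * Aπ i j * (x i * x j) = ε * (x i * (Aπ i j * x j)) := by ring
          _ = |x i * (Aπ i j * x j)| := htermeq i j
          _ = |x i| * (|Aπ i j| * |x j|) := by rw [abs_mul, abs_mul]
          _ = (d i * x i) * ((d j * x j)) := by rw [haabs, one_mul, hdx, hdx]
          _ = (d i * d j) * (x i * x j) := by ring
      have h2 : ε * Aπ i j = d i * d j := mul_right_cancel₀ hxij key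
      calc d i * (Aπ i j * d j) = (d i * d j) * Aπ i j := by ring
        _ = (ε * Aπ i j) * Aπ i j := by rw [h2]
        _ = ε * (Aπ i j * Aπ i j) := by ring
        _ = ε := by rw [ha2, mul_one]
    set ε' : ℤˣ := if 0 ≤ μ then 1 else -1 with hε'
    have hεcast : ((ε' : ℤ) : ℝ) = ε := by
      by_cases h : 0 ≤ μ
      · rw [hε', hε, if_pos h, if_pos h]; norm_num
      · rw [hε', hε, if_neg h, if_neg h]; norm_num
    have hmat : signedAdj G (fun _ => ε') = Matrix.diagonal d * Aπ * Matrix.diagonal d := by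
      ext i j
      rw [Matrix.mul_diagonal, Matrix.diagonal_mul]
      by_cases h : G.Adj i j
      · rw [GraphAux.signedAdj_of_adj G _ h, hεcast, ← hedge i j h]; ring
      · rw [GraphAux.signedAdj_of_not_adj G _ h, hAπdef,
          GraphAux.signedAdj_of_not_adj G _ h]
        ring
    by_cases hsgn : 0 ≤ μ
    · left
      refine ⟨d, hdpm, ?_⟩
      have h1 : ε' = 1 := by rw [hε']; exact if_pos hsgn
      have h2 : (fun _ : G.edgeSet => (1 : ℤˣ)) = fun _ => ε' := funext fun _ => h1.symm
      rw [hNdef, h2]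
      exact hmat
    · right
      refine ⟨d, hdpm, ?_⟩
      have h1 : ε' = -1 := by rw [hε']; exact if_neg hsgn
      have h2 : (fun _ : G.edgeSet => (-1 : ℤˣ)) = fun _ => ε' := funext fun _ => h1.symm
      rw [h2]
      exact hmat
  · -- switching equivalence implies equality
    rintro (⟨d, hdpm, hB⟩ | ⟨d, hdpm, hB⟩)
    · rw [hgr, hB, SpecAux.specRad_switch hdpm]
    · rw [hgr, ← SpecAux.specRad_switch hdpm Aπ, ← hB,
        GraphAux.signedAdj_neg_one, SpecAux.specRad_neg]
end

section
/- Let G be a connected finite simple graph with edge set E and let d be a positive integer. Then the number P_d(G) of parity-closed walks of length d in G equals 2^{−|E|} Σ_π trace(A(G_π)^d), where the sum is over all 2^{|E|} sign functions π on G. -/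
open Matrix Finset
open scoped Classical

/-- The number of parity-closed walks of length `d` in `G`: closed walks (with a starting
vertex) using every edge an even number of times. -/
noncomputable def parityClosedWalkCount {V : Type*} [Fintype V] [DecidableEq V]
    (G : SimpleGraph V) (d : ℕ) : ℕ :=
  Nat.card {p : Σ v : V, G.Walk v v //
    p.2.length = d ∧ ∀ e : Sym2 V, Even (p.2.edges.count e)}

namespace ParityAux

open Matrix Finset
open scoped Classical

variable {V : Type*} [Fintype V] [DecidableEq V] (G : SimpleGraph V)

/-- weight of a single edge under a signing -/
noncomputable def edgeWeight (π : G.edgeSet → ℤˣ) (e : Sym2 V) : ℝ :=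
  if h : e ∈ G.edgeSet then ((π ⟨e, h⟩ : ℤ) : ℝ) else 0

lemma signedAdj_apply (π : G.edgeSet → ℤˣ) (i j : V) :
    signedAdj G π i j = edgeWeight G π s(i, j) := by
  simp only [signedAdj, Matrix.of_apply, edgeWeight, SimpleGraph.mem_edgeSet]

/-- weight of a walk under a signing -/
noncomputable def walkWeight (π : G.edgeSet → ℤˣ) {u v : V} (p : G.Walk u v) : ℝ :=
  (p.edges.map (edgeWeight G π)).prod

@[simp] lemma walkWeight_nil (π : G.edgeSet → ℤˣ) (u : V) :
    walkWeight G π (SimpleGraph.Walk.nil : G.Walk u u) = 1 := by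
  simp [walkWeight]

@[simp] lemma walkWeight_cons (π : G.edgeSet → ℤˣ) {u w v : V} (h : G.Adj u w)
    (p : G.Walk w v) :
    walkWeight G π (SimpleGraph.Walk.cons h p) = edgeWeight G π s(u, w) * walkWeight G π p := by
  simp [walkWeight]

lemma signedAdj_pow_apply (π : G.edgeSet → ℤˣ) :
    ∀ (n : ℕ) (u v : V), ((signedAdj G π) ^ n) u v =
      ∑ p ∈ G.finsetWalkLength n u v, walkWeight G π p := by
  intro n
  induction n with
  | zero =>
    intro u v
    obtain rfl | huv := eq_or_ne u v
    · simp [SimpleGraph.finsetWalkLength, Matrix.one_apply]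
    · simp [SimpleGraph.finsetWalkLength, huv, Matrix.one_apply]
  | succ n ih =>
    intro u v
    rw [pow_succ', Matrix.mul_apply]
    have hrhs : ∑ p ∈ G.finsetWalkLength (n + 1) u v, walkWeight G π p =
        ∑ w : G.neighborSet u, ∑ p ∈ G.finsetWalkLength n w v,
          edgeWeight G π s(u, (w : V)) * walkWeight G π p := by
      show ∑ p ∈ Finset.univ.biUnion
          (fun (w : G.neighborSet u) => (G.finsetWalkLength n w v).map
            ⟨fun p => SimpleGraph.Walk.cons w.property p, fun _ _ => by intro h; cases h; rfl⟩), walkWeight G π p = _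
      rw [Finset.sum_biUnion]
      · apply Finset.sum_congr rfl
        intro w _
        rw [Finset.sum_map]
        apply Finset.sum_congr rfl
        intro p _
        exact walkWeight_cons G π w.property p
      · rintro ⟨x, hx⟩ - ⟨y, hy⟩ - hxy
        simp only [Function.onFun]
        rw [Finset.disjoint_left]
        intro p hp hp'
        simp only [Finset.mem_map, Function.Embedding.coeFn_mk] at hp hp'
        obtain ⟨px, _, rfl⟩ := hp
        obtain ⟨py, _, hp'⟩ := hp'
        cases hp'
        simp at hxy
    rw [hrhs]
    have hsub : ∀ w : V, w ∈ (G.neighborSet u).toFinset ↔ w ∈ G.neighborSet u :=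
      fun w => Set.mem_toFinset
    rw [← Finset.sum_subtype ((G.neighborSet u).toFinset) hsub
      (fun w => ∑ p ∈ G.finsetWalkLength n w v, edgeWeight G π s(u, w) * walkWeight G π p)]
    rw [← Finset.sum_subset (Finset.subset_univ ((G.neighborSet u).toFinset))]
    · apply Finset.sum_congr rfl
      intro w _
      rw [signedAdj_apply, ih, Finset.mul_sum]
    · intro w _ hw
      rw [Set.mem_toFinset, SimpleGraph.mem_neighborSet] at hw
      have : signedAdj G π u w = 0 := by
        simp [signedAdj, hw]
      rw [this, zero_mul]

lemma sum_sign_pow (c : ℕ) :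
    ∑ s : ℤˣ, ((s : ℤ) : ℝ) ^ c = if Even c then 2 else 0 := by
  have huniv : (Finset.univ : Finset ℤˣ) = {1, -1} := by
    ext u
    simp only [Finset.mem_univ, Finset.mem_insert, Finset.mem_singleton, true_iff]
    exact Int.units_eq_one_or u
  rw [huniv, Finset.sum_insert (by decide), Finset.sum_singleton]
  by_cases hc : Even c
  · simp [hc, Even.neg_one_pow hc]
    norm_num
  · simp [hc, Odd.neg_one_pow (Nat.not_even_iff_odd.mp hc)]

lemma sum_pi_walkWeight {u v : V} (p : G.Walk u v) :
    ∑ π : G.edgeSet → ℤˣ, walkWeight G π p =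
      if (∀ e : Sym2 V, Even (p.edges.count e)) then (2 : ℝ) ^ G.edgeSet.ncard else 0 := by
  have h1 : ∀ π : G.edgeSet → ℤˣ, walkWeight G π p =
      ∏ e : G.edgeSet, ((π e : ℤ) : ℝ) ^ (p.edges.count (e : Sym2 V)) := by
    intro π
    rw [walkWeight, Finset.prod_list_map_count,
      show (∏ e : G.edgeSet, ((π e : ℤ) : ℝ) ^ (p.edges.count (e : Sym2 V))) =
        ∏ e : G.edgeSet, edgeWeight G π (e : Sym2 V) ^ (p.edges.count (e : Sym2 V)) from
        Finset.prod_congr rfl (by rintro ⟨e, he⟩ -; simp [edgeWeight, he]),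
      Finset.prod_set_coe (f := fun e => edgeWeight G π e ^ (p.edges.count e)) (s := G.edgeSet)]
    exact Finset.prod_subset
      (fun e he => Set.mem_toFinset.mpr (p.edges_subset_edgeSet (List.mem_toFinset.mp he)))
      (fun e _ he => by
        rw [List.count_eq_zero_of_not_mem (fun hm => he (List.mem_toFinset.mpr hm)), pow_zero])
  simp only [h1]
  rw [← Fintype.prod_sum (fun (e : G.edgeSet) (s : ℤˣ) => ((s : ℤ) : ℝ) ^ (p.edges.count (e : Sym2 V)))]
  have h2 : ∀ e : G.edgeSet, (∑ s : ℤˣ, ((s : ℤ) : ℝ) ^ (p.edges.count (e : Sym2 V))) =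
      if Even (p.edges.count (e : Sym2 V)) then (2 : ℝ) else 0 := fun e => sum_sign_pow _
  simp only [h2]
  have hcard : G.edgeSet.ncard = Fintype.card G.edgeSet := by
    rw [Set.ncard_eq_toFinset_card', Set.toFinset_card]
  by_cases hall : ∀ e : Sym2 V, Even (p.edges.count e)
  · rw [if_pos hall]
    calc (∏ e : G.edgeSet, if Even (p.edges.count (e : Sym2 V)) then (2 : ℝ) else 0)
        = ∏ _e : G.edgeSet, (2 : ℝ) :=
          Finset.prod_congr rfl (fun e _ => if_pos (hall (e : Sym2 V)))
      _ = (2 : ℝ) ^ G.edgeSet.ncard := by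
          rw [Finset.prod_const, hcard, Finset.card_univ]
  · rw [if_neg hall]
    push_neg at hall
    obtain ⟨e, he⟩ := hall
    have heG : e ∈ G.edgeSet := by
      by_contra h
      exact he (by rw [List.count_eq_zero_of_not_mem (fun hm => h (p.edges_subset_edgeSet hm))]; exact Even.zero)
    exact Finset.prod_eq_zero (Finset.mem_univ (⟨e, heG⟩ : G.edgeSet)) (if_neg he)

end ParityAux


/-- For a connected graph `G`,
`P_d(G) = 2^{−|E|} Σ_π tr(A(G_π)^d)`, the sum over all sign functions on `G`. -/
theorem parityClosedWalkCount_eq_avg_trace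
    {V : Type*} [Fintype V] [DecidableEq V] (G : SimpleGraph V)
    (hG : G.Connected) (d : ℕ) (hd : 0 < d) :
    (parityClosedWalkCount G d : ℝ) =
      (∑ π : G.edgeSet → ℤˣ, ((signedAdj G π) ^ d).trace) / 2 ^ G.edgeSet.ncard := by
  classical
  set F : ∀ v : V, Finset (G.Walk v v) := fun v =>
    (G.finsetWalkLength d v v).filter (fun p => ∀ e : Sym2 V, Even (p.edges.count e)) with hF
  have hcount : parityClosedWalkCount G d = ∑ v : V, (F v).card := by
    have e : {p : Σ v : V, G.Walk v v //
        p.2.length = d ∧ ∀ e : Sym2 V, Even (p.2.edges.count e)} ≃ (Σ v : V, F v) :=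
      { toFun := fun q => ⟨q.1.1, ⟨q.1.2,
          Finset.mem_filter.mpr ⟨SimpleGraph.mem_finsetWalkLength_iff.mpr q.2.1, q.2.2⟩⟩⟩
        invFun := fun q => ⟨⟨q.1, q.2.1⟩, by
          have := Finset.mem_filter.mp q.2.2
          exact ⟨SimpleGraph.mem_finsetWalkLength_iff.mp this.1, this.2⟩⟩
        left_inv := fun q => rfl
        right_inv := fun q => rfl }
    rw [parityClosedWalkCount, Nat.card_congr e, Nat.card_eq_fintype_card,
      Fintype.card_sigma]
    simp [Fintype.card_coe]
  have hsum : ∑ π : G.edgeSet → ℤˣ, ((signedAdj G π) ^ d).trace =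
      (2 : ℝ) ^ G.edgeSet.ncard * ∑ v : V, ((F v).card : ℝ) := by
    have h1 : ∀ π : G.edgeSet → ℤˣ, ((signedAdj G π) ^ d).trace =
        ∑ v : V, ∑ p ∈ G.finsetWalkLength d v v, ParityAux.walkWeight G π p := by
      intro π
      rw [Matrix.trace]
      exact Finset.sum_congr rfl fun v _ => ParityAux.signedAdj_pow_apply G π d v v
    simp only [h1]
    rw [Finset.sum_comm, Finset.mul_sum]
    apply Finset.sum_congr rfl
    intro v _
    rw [Finset.sum_comm]
    have h2 : ∀ p ∈ G.finsetWalkLength d v v,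
        ∑ π : G.edgeSet → ℤˣ, ParityAux.walkWeight G π p =
        if (∀ e : Sym2 V, Even (p.edges.count e)) then (2 : ℝ) ^ G.edgeSet.ncard else 0 :=
      fun p _ => ParityAux.sum_pi_walkWeight G p
    rw [Finset.sum_congr rfl h2, ← Finset.sum_filter, Finset.sum_const, nsmul_eq_mul, mul_comm]
  rw [hcount, hsum, mul_comm, mul_div_assoc,
    div_self (by positivity : (2 : ℝ) ^ G.edgeSet.ncard ≠ 0), mul_one]
  push_cast
  ring
end
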